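/- The closed-form update W^{τ+1} = W^τ + α_τ V^τ with V^τ = a_τ(a_τ^+ − a_τ^−)^T and α_τ = min{C, L_{W^τ}(a,a^+,a^−)/‖V^τ‖_F²} solves the constrained optimization problem min_W (1/2)‖W − W^τ‖_F² + Cξ subject to L_W(a,a^+,a^−) ≤ ξ, ξ ≥ 0, where L_W is the hinge loss L_W(a,a^+,a^−) = max{0, 1 − a^T W a^+ + a^T W a^−}. -/

import Mathlib

open Matrix Finset

lemma pa_scalar (s q C SD t ξ α : ℝ) (hs : 0 < s) (hC : 0 < C)
    (hα : α = min C (max 0 q / s)) (hCS : t ^ 2 ≤ SD * s)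
    (hξ1 : max 0 (q - t) ≤ ξ) (hξ2 : 0 ≤ ξ) :
    (1 / 2) * (α ^ 2 * s) + C * max 0 (q - α * s) ≤ (1 / 2) * SD + C * ξ := by
  have hSD : 0 ≤ SD := by nlinarith [sq_nonneg t]
  rcases le_total C (max 0 q / s) with h | h
  · have hαC : α = C := by rw [hα, min_eq_left h]
    have hq' : C * s ≤ max 0 q := (le_div_iff₀ hs).mp h
    have hq : C * s ≤ q := by
      rcases le_total q 0 with h0 | h0
      · have : max 0 q = 0 := max_eq_left h0
        nlinarith [mul_pos hC hs]
      · rwa [max_eq_right h0] at hq'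
    have hmax : max 0 (q - α * s) = q - α * s :=
      max_eq_right (by rw [hαC]; linarith)
    have hξt : q - t ≤ ξ := le_trans (le_max_right _ _) hξ1
    rw [hmax, hαC]
    nlinarith [hCS, sq_nonneg (t - C * s), mul_pos hC hs]
  · have hαq : α = max 0 q / s := by rw [hα, min_eq_right h]
    have hαs : α * s = max 0 q := by rw [hαq]; field_simp
    have hmax : max 0 (q - α * s) = 0 :=
      max_eq_left (by rw [hαs]; simp only [sub_nonpos]; exact le_max_right 0 q)
    rw [hmax, mul_zero, add_zero]
    rcases le_total q 0 with h0 | h0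
    · have hM : max 0 q = 0 := max_eq_left h0
      have hα0 : α = 0 := by rw [hαq, hM, zero_div]
      rw [hα0]; nlinarith
    · have hM : max 0 q = q := max_eq_right h0
      have hαs' : α * s = q := by rw [hαs, hM]
      have hαC : α ≤ C := by rw [hα]; exact min_le_left _ _
      have hqCs : q ≤ C * s := by nlinarith [mul_le_mul_of_nonneg_right hαC hs.le]
      have hξt : q - t ≤ ξ := le_trans (le_max_right _ _) hξ1
      have h2 : α ^ 2 * s * s = q ^ 2 := by
        rw [show α ^ 2 * s * s = (α * s) ^ 2 by ring, hαs']
      nlinarith [hCS, sq_nonneg (t - q), mul_le_mul_of_nonneg_right hqCs hξ2,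
        mul_le_mul_of_nonneg_left hξt h0, hs]

/-- The closed-form Passive-Aggressive update `W' = Wτ + α • V`, with
`V = a (a⁺ - a⁻)ᵀ` and `α = min{C, L_{Wτ}/‖V‖_F²}`, solves the constrained problem
`min_{W,ξ} (1/2)‖W - Wτ‖_F² + Cξ` subject to `L_W ≤ ξ`, `ξ ≥ 0`, where
`L_W = max{0, 1 - aᵀW a⁺ + aᵀW a⁻}`. -/
theorem stmt_5 {m : ℕ} (Wτ : Matrix (Fin m) (Fin m) ℝ)
    (a ap am : Fin m → ℝ) (C : ℝ) (hC : 0 < C)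
    (ha : a ≠ 0) (hapm : ap ≠ am)
    (V : Matrix (Fin m) (Fin m) ℝ)
    (hV : ∀ i j, V i j = a i * (ap j - am j)) (hVne : V ≠ 0)
    (L : Matrix (Fin m) (Fin m) ℝ → ℝ)
    (hL : ∀ W, L W = max 0 (1 - a ⬝ᵥ W.mulVec ap + a ⬝ᵥ W.mulVec am))
    (α : ℝ) (hα : α = min C (L Wτ / ∑ i, ∑ j, (V i j) ^ 2)) :
    0 ≤ L (Wτ + α • V) ∧
    ∀ (W : Matrix (Fin m) (Fin m) ℝ) (ξ : ℝ), L W ≤ ξ → 0 ≤ ξ →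
      (1 / 2) * (∑ i, ∑ j, ((Wτ + α • V - Wτ) i j) ^ 2) + C * L (Wτ + α • V)
        ≤ (1 / 2) * (∑ i, ∑ j, ((W - Wτ) i j) ^ 2) + C * ξ := by
  set s : ℝ := ∑ i, ∑ j, (V i j) ^ 2 with hsdef
  have hsprod : s = ∑ p : Fin m × Fin m, (V p.1 p.2) ^ 2 := by
    rw [hsdef, Fintype.sum_prod_type]
  have hs : 0 < s := by
    have h0 : 0 ≤ s := by rw [hsprod]; positivity
    rcases h0.lt_or_eq with h | h
    · exact h
    · exfalso; apply hVne; ext i j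
      have hzero : ∑ p : Fin m × Fin m, (V p.1 p.2) ^ 2 = 0 := by
        rw [← hsprod]; exact h.symm
      have hall := (Finset.sum_eq_zero_iff_of_nonneg
        (fun p _ => sq_nonneg (V p.1 p.2))).mp hzero
      have := hall (i, j) (Finset.mem_univ _)
      simpa using pow_eq_zero_iff (n := 2) (by norm_num) |>.mp this
  -- key identity
  have hkey : ∀ W : Matrix (Fin m) (Fin m) ℝ,
      a ⬝ᵥ W.mulVec ap - a ⬝ᵥ W.mulVec am = ∑ i, ∑ j, W i j * V i j := by
    intro W
    simp only [dotProduct, mulVec]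
    rw [← Finset.sum_sub_distrib]
    refine Finset.sum_congr rfl fun i _ => ?_
    rw [Finset.mul_sum, Finset.mul_sum, ← Finset.sum_sub_distrib]
    refine Finset.sum_congr rfl fun j _ => ?_
    rw [hV]; ring
  have hLW : ∀ W : Matrix (Fin m) (Fin m) ℝ,
      L W = max 0 (1 - ∑ i, ∑ j, W i j * V i j) := by
    intro W
    rw [hL W]; congr 1
    rw [← hkey W]; ring
  set I0 : ℝ := ∑ i, ∑ j, Wτ i j * V i j with hI0
  have hupd : ∑ i, ∑ j, (Wτ + α • V) i j * V i j = I0 + α * s := by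
    have h1 : ∀ i j, (Wτ + α • V) i j * V i j
        = Wτ i j * V i j + α * (V i j) ^ 2 := by
      intro i j
      simp only [Matrix.add_apply, Matrix.smul_apply, smul_eq_mul]; ring
    simp_rw [h1, Finset.sum_add_distrib, ← Finset.mul_sum]
    rfl
  have hdiff : ∑ i, ∑ j, ((Wτ + α • V - Wτ) i j) ^ 2 = α ^ 2 * s := by
    have h1 : ∀ i j, ((Wτ + α • V - Wτ) i j) ^ 2 = α ^ 2 * (V i j) ^ 2 := by
      intro i j
      simp only [Matrix.add_apply, Matrix.sub_apply, Matrix.smul_apply, smul_eq_mul]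
      ring
    simp_rw [h1, ← Finset.mul_sum]
    rfl
  constructor
  · rw [hL]; exact le_max_left _ _
  · intro W ξ hWξ hξ0
    set t : ℝ := ∑ i, ∑ j, (W - Wτ) i j * V i j with ht
    have hWsum : ∑ i, ∑ j, W i j * V i j = I0 + t := by
      rw [ht, hI0]
      have h1 : ∀ i j, W i j * V i j
          = Wτ i j * V i j + (W - Wτ) i j * V i j := by
        intro i j; simp only [Matrix.sub_apply]; ring
      simp_rw [h1, Finset.sum_add_distrib]
    have hCS : t ^ 2 ≤ (∑ i, ∑ j, ((W - Wτ) i j) ^ 2) * s := by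
      have h1 : t = ∑ p : Fin m × Fin m, (W - Wτ) p.1 p.2 * V p.1 p.2 := by
        rw [ht, Fintype.sum_prod_type]
      have h2 : (∑ i, ∑ j, ((W - Wτ) i j) ^ 2)
          = ∑ p : Fin m × Fin m, ((W - Wτ) p.1 p.2) ^ 2 := by
        rw [Fintype.sum_prod_type]
      have := Finset.sum_mul_sq_le_sq_mul_sq Finset.univ
        (fun p : Fin m × Fin m => (W - Wτ) p.1 p.2)
        (fun p : Fin m × Fin m => V p.1 p.2)
      rw [h1, h2, hsprod]
      simpa using this
    have hq : L Wτ = max 0 (1 - I0) := by rw [hLW Wτ, hI0]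
    have hLupd : L (Wτ + α • V) = max 0 ((1 - I0) - α * s) := by
      rw [hLW, hupd]; congr 1; ring
    have hξ1 : max 0 ((1 - I0) - t) ≤ ξ := by
      rw [← show L W = max 0 ((1 - I0) - t) from by rw [hLW, hWsum]; congr 1; ring]
      exact hWξ
    rw [hdiff, hLupd]
    exact pa_scalar s (1 - I0) C _ t ξ α hs hC (by rw [hα, hq]) hCS hξ1 hξ0
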